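/- Define Φ⁺(θ,φ) = (1/(2√π))·(i cos θ, i e^{iφ} sin θ, 0, 0) ∈ ℂ⁴ and Φ⁻ = (1/(2√π))·(0, 0, 1, 0) ∈ ℂ⁴, and let u⁺, u⁻ : (0,∞) → ℂ. Set u(r,θ,φ) = u⁺(r)Φ⁺(θ,φ) + u⁻(r)Φ⁻. Then for all r > 0 and θ, φ ∈ ℝ: ⟨u(r,θ,φ), u(r,θ,φ)⟩ · u(r,θ,φ) = v⁺(r)Φ⁺(θ,φ) + v⁻(r)Φ⁻ with v^±(r) = (1/(4π))(|u⁺(r)|² + |u⁻(r)|²) u^±(r), and ⟨βu(r,θ,φ), u(r,θ,φ)⟩ · u(r,θ,φ) = w⁺(r)Φ⁺(θ,φ) + w⁻(r)Φ⁻ with w^±(r) = (1/(4π))(|u⁺(r)|² − |u⁻(r)|²) u^±(r). In particular, functions of the form u⁺(r)Φ⁺ + u⁻(r)Φ⁻ are mapped to functions of the same form by the nonlinearities F(u) = ⟨u,u⟩u and F(u) = ⟨βu,u⟩u. -/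

import Mathlib

open Complex

/-- The standard Hermitian inner product on `ℂ⁴` (conjugate-linear in the first slot). -/
noncomputable def c4inner (v w : Fin 4 → ℂ) : ℂ := ∑ i, (starRingEnd ℂ) (v i) * w i

/-- The Dirac matrix `β = diag(1,1,−1,−1)` acting on `ℂ⁴`. -/
def betaC4 (v : Fin 4 → ℂ) : Fin 4 → ℂ := ![v 0, v 1, -v 2, -v 3]

/-- The spinor `Φ⁺_{1/2,1}(θ,φ) = (1/(2√π))·(i cos θ, i e^{iφ} sin θ, 0, 0)`. -/
noncomputable def PhiPlus (θ φ : ℝ) : Fin 4 → ℂ :=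
  (1 / (2 * Real.sqrt Real.pi) : ℂ) •
    ![Complex.I * (Real.cos θ : ℂ),
      Complex.I * Complex.exp (Complex.I * (φ : ℂ)) * (Real.sin θ : ℂ), 0, 0]

/-- The spinor `Φ⁻_{1/2,1} = (1/(2√π))·(0, 0, 1, 0)`. -/
noncomputable def PhiMinus : Fin 4 → ℂ :=
  (1 / (2 * Real.sqrt Real.pi) : ℂ) • ![0, 0, 1, 0]

lemma sqpi : ((Real.sqrt Real.pi : ℂ)) * (Real.sqrt Real.pi : ℂ) = (Real.pi : ℂ) := by
  rw [← Complex.ofReal_mul, Real.mul_self_sqrt Real.pi_pos.le]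

lemma key (a b : ℂ) (θ φ : ℝ) :
    c4inner (a • PhiPlus θ φ + b • PhiMinus) (a • PhiPlus θ φ + b • PhiMinus)
    = (((1/(4*Real.pi)) * (‖a‖ ^ 2 + ‖b‖ ^ 2) : ℝ) : ℂ) := by
  have hπ : (Real.pi : ℂ) ≠ 0 := by exact_mod_cast Real.pi_ne_zero
  have hs : ((Real.sqrt Real.pi : ℂ)) ≠ 0 := fun h => hπ (by rw [← sqpi, h, mul_zero])
  have hexp : Complex.exp (Complex.I * φ) * Complex.exp (-Complex.I * φ) = 1 := by
    rw [← Complex.exp_add]; ring_nf; exact Complex.exp_zero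
  have hcs : ((Real.cos θ : ℂ))^2 + ((Real.sin θ : ℂ))^2 = 1 := by
    exact_mod_cast Real.cos_sq_add_sin_sq θ
  have ha : (starRingEnd ℂ) a * a = ((‖a‖ : ℝ) : ℂ)^2 := by
    rw [mul_comm, Complex.mul_conj, ← Complex.sq_norm]; norm_cast
  have hb : (starRingEnd ℂ) b * b = ((‖b‖ : ℝ) : ℂ)^2 := by
    rw [mul_comm, Complex.mul_conj, ← Complex.sq_norm]; norm_cast
  simp only [c4inner, Fin.sum_univ_four, PhiPlus, PhiMinus, Pi.add_apply, Pi.smul_apply,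
    smul_eq_mul, Matrix.cons_val_zero, Matrix.cons_val_one, Matrix.head_cons,
    Matrix.cons_val_two, Matrix.tail_cons, Matrix.cons_val_three, map_add, map_mul, map_one,
    map_zero, map_div₀, map_ofNat, Complex.conj_I, Complex.conj_ofReal, ← Complex.exp_conj,
    Complex.ofReal_mul, Complex.ofReal_div, Complex.ofReal_add, Complex.ofReal_pow,
    Complex.ofReal_one, Complex.ofReal_ofNat]
  set p := (Real.sqrt Real.pi : ℂ) with hp
  have hI : Complex.I * Complex.I = -1 := Complex.I_mul_I
  have hpq : p * p⁻¹ = 1 := mul_inv_cancel₀ hs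
  have hπr : (Real.pi : ℂ) * (Real.pi : ℂ)⁻¹ = 1 := mul_inv_cancel₀ hπ
  set A := (starRingEnd ℂ) a * a with hA
  set B := (starRingEnd ℂ) b * b with hB
  set c := ((Real.cos θ : ℝ) : ℂ)
  set sn := ((Real.sin θ : ℝ) : ℂ)
  set E1 := Complex.exp (Complex.I * φ)
  set E2 := Complex.exp (-Complex.I * φ)
  linear_combination (-(A * p⁻¹^2 / 4) * (c^2 + E1 * E2 * sn^2)) * hI
    + (A * p⁻¹^2 * sn^2 / 4) * hexp
    + (A * p⁻¹^2 / 4) * hcs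
    + ((Real.pi:ℂ)⁻¹/4) * ha + ((Real.pi:ℂ)⁻¹/4) * hb
    - (p⁻¹^2 * (A+B) / 4) * hπr
    - ((A+B) * (Real.pi:ℂ)⁻¹ * p⁻¹^2 / 4) * sqpi
    + ((A+B) * (Real.pi:ℂ)⁻¹ * (p * p⁻¹ + 1) / 4) * hpq

lemma keyBeta (a b : ℂ) (θ φ : ℝ) :
    c4inner (betaC4 (a • PhiPlus θ φ + b • PhiMinus)) (a • PhiPlus θ φ + b • PhiMinus)
    = (((1/(4*Real.pi)) * (‖a‖ ^ 2 - ‖b‖ ^ 2) : ℝ) : ℂ) := by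
  have hπ : (Real.pi : ℂ) ≠ 0 := by exact_mod_cast Real.pi_ne_zero
  have hs : ((Real.sqrt Real.pi : ℂ)) ≠ 0 := fun h => hπ (by rw [← sqpi, h, mul_zero])
  have hexp : Complex.exp (Complex.I * φ) * Complex.exp (-Complex.I * φ) = 1 := by
    rw [← Complex.exp_add]; ring_nf; exact Complex.exp_zero
  have hcs : ((Real.cos θ : ℂ))^2 + ((Real.sin θ : ℂ))^2 = 1 := by
    exact_mod_cast Real.cos_sq_add_sin_sq θ
  have ha : (starRingEnd ℂ) a * a = ((‖a‖ : ℝ) : ℂ)^2 := by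
    rw [mul_comm, Complex.mul_conj, ← Complex.sq_norm]; norm_cast
  have hb : (starRingEnd ℂ) b * b = ((‖b‖ : ℝ) : ℂ)^2 := by
    rw [mul_comm, Complex.mul_conj, ← Complex.sq_norm]; norm_cast
  simp only [c4inner, betaC4, Fin.sum_univ_four, PhiPlus, PhiMinus, Pi.add_apply, Pi.smul_apply,
    smul_eq_mul, Matrix.cons_val_zero, Matrix.cons_val_one, Matrix.head_cons,
    Matrix.cons_val_two, Matrix.tail_cons, Matrix.cons_val_three, map_add, map_mul, map_one,
    map_zero, map_neg, map_div₀, map_ofNat, Complex.conj_I, Complex.conj_ofReal,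
    ← Complex.exp_conj, Complex.ofReal_mul, Complex.ofReal_div, Complex.ofReal_sub,
    Complex.ofReal_pow, Complex.ofReal_one, Complex.ofReal_ofNat]
  set p := (Real.sqrt Real.pi : ℂ) with hp
  have hI : Complex.I * Complex.I = -1 := Complex.I_mul_I
  have hpq : p * p⁻¹ = 1 := mul_inv_cancel₀ hs
  have hπr : (Real.pi : ℂ) * (Real.pi : ℂ)⁻¹ = 1 := mul_inv_cancel₀ hπ
  set A := (starRingEnd ℂ) a * a with hA
  set B := (starRingEnd ℂ) b * b with hB
  set c := ((Real.cos θ : ℝ) : ℂ)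
  set sn := ((Real.sin θ : ℝ) : ℂ)
  set E1 := Complex.exp (Complex.I * φ)
  set E2 := Complex.exp (-Complex.I * φ)
  linear_combination (-(A * p⁻¹^2 / 4) * (c^2 + E1 * E2 * sn^2)) * hI
    + (A * p⁻¹^2 * sn^2 / 4) * hexp
    + (A * p⁻¹^2 / 4) * hcs
    + ((Real.pi:ℂ)⁻¹/4) * ha - ((Real.pi:ℂ)⁻¹/4) * hb
    - (p⁻¹^2 * (A-B) / 4) * hπr
    - ((A-B) * (Real.pi:ℂ)⁻¹ * p⁻¹^2 / 4) * sqpi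
    + ((A-B) * (Real.pi:ℂ)⁻¹ * (p * p⁻¹ + 1) / 4) * hpq


/-- For radial profiles `u⁺, u⁻ : (0,∞) → ℂ` and
`u(r,θ,φ) = u⁺(r)Φ⁺(θ,φ) + u⁻(r)Φ⁻`, one has
`⟨u,u⟩·u = v⁺(r)Φ⁺(θ,φ) + v⁻(r)Φ⁻` with
`v^± = (1/(4π))(|u⁺|² + |u⁻|²)u^±`, and
`⟨βu,u⟩·u = w⁺(r)Φ⁺(θ,φ) + w⁻(r)Φ⁻` with
`w^± = (1/(4π))(|u⁺|² − |u⁻|²)u^±`: the cubic nonlinearities `⟨u,u⟩u` and `⟨βu,u⟩u`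
preserve the form `u⁺(r)Φ⁺ + u⁻(r)Φ⁻`. -/
theorem partial_wave_nonlinearity_invariance (uP uM : ℝ → ℂ) :
    ∀ r, 0 < r → ∀ θ φ : ℝ,
      (c4inner (uP r • PhiPlus θ φ + uM r • PhiMinus)
          (uP r • PhiPlus θ φ + uM r • PhiMinus)
        • (uP r • PhiPlus θ φ + uM r • PhiMinus)
        = ((((1 / (4 * Real.pi)) * (‖uP r‖ ^ 2 + ‖uM r‖ ^ 2) : ℝ) : ℂ)
              * uP r) • PhiPlus θ φ
          + ((((1 / (4 * Real.pi)) * (‖uP r‖ ^ 2 + ‖uM r‖ ^ 2) : ℝ) : ℂ)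
              * uM r) • PhiMinus) ∧
      (c4inner (betaC4 (uP r • PhiPlus θ φ + uM r • PhiMinus))
          (uP r • PhiPlus θ φ + uM r • PhiMinus)
        • (uP r • PhiPlus θ φ + uM r • PhiMinus)
        = ((((1 / (4 * Real.pi)) * (‖uP r‖ ^ 2 - ‖uM r‖ ^ 2) : ℝ) : ℂ)
              * uP r) • PhiPlus θ φ
          + ((((1 / (4 * Real.pi)) * (‖uP r‖ ^ 2 - ‖uM r‖ ^ 2) : ℝ) : ℂ)
              * uM r) • PhiMinus) := by
  intro r _ θ φ
  refine ⟨?_, ?_⟩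
  · rw [key (uP r) (uM r) θ φ, smul_add, smul_smul, smul_smul]
  · rw [keyBeta (uP r) (uM r) θ φ, smul_add, smul_smul, smul_smul]
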